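/- Let K be a finite simplicial complex with an acyclic partial matching μ : M → M. Then the set B_q^R ∪ B_q^↑ ∪ B_q^↓, where B_q^R = {φ_q(γ) : γ ∈ R_q(μ)}, B_q^↑ = M_q^↑, and B_q^↓ = {∂β : β ∈ M_{q+1}^↑}, is a basis of the ℤ/2-vector space C_q(K). -/

import Mathlib

set_option maxSynthPendingDepth 2

/-! Simplicial ℤ/2 chains and homology machinery. -/

/-- Chains with `ℤ/2` coefficients, formal sums of finite subsets of `V`. -/
abbrev Ch (V : Type*) := Finset V →₀ ZMod 2

/-- The simplicial boundary operator: a simplex with at least two vertices is sent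
to the sum of its codimension-1 faces; vertices are sent to `0`. -/
noncomputable def bdry (V : Type*) [DecidableEq V] : Ch V →ₗ[ZMod 2] Ch V :=
  Finsupp.linearCombination (ZMod 2) fun σ : Finset V =>
    if σ.card ≤ 1 then 0 else ∑ v ∈ σ, Finsupp.single (σ.erase v) (1 : ZMod 2)

/-- A simplicial complex: a collection of nonempty finite subsets of `V`
closed under taking nonempty subsets. -/
def IsComplex {V : Type*} (K : Set (Finset V)) : Prop :=
  ∀ σ ∈ K, σ.Nonempty ∧ ∀ τ ⊆ σ, τ.Nonempty → τ ∈ K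

/-- The space of chains supported on simplices of `K` with `k` vertices
(i.e. the simplicial chain group of degree `k - 1`). -/
noncomputable def chainCard {V : Type*} [DecidableEq V] (K : Set (Finset V)) (k : ℕ) :
    Submodule (ZMod 2) (Ch V) :=
  Submodule.span (ZMod 2) {f | ∃ σ ∈ K, σ.card = k ∧ f = Finsupp.single σ 1}

theorem chainCard_mono {V : Type*} [DecidableEq V] {K₁ K₂ : Set (Finset V)}
    (h : K₁ ⊆ K₂) (k : ℕ) : chainCard K₁ k ≤ chainCard K₂ k := by
  apply Submodule.span_mono
  rintro f ⟨σ, hσ, hc, rfl⟩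
  exact ⟨σ, h hσ, hc, rfl⟩

/-- Cycles (in cardinality grading `k`, i.e. degree `k-1`) of a chain subcomplex `W`. -/
noncomputable def cyclesOf {V : Type*} [DecidableEq V] (W : ℕ → Submodule (ZMod 2) (Ch V)) (k : ℕ) :
    Submodule (ZMod 2) (Ch V) :=
  W k ⊓ LinearMap.ker (bdry V)

/-- Boundaries (in cardinality grading `k`, i.e. degree `k-1`) of a chain subcomplex `W`. -/
noncomputable def bdriesOf {V : Type*} [DecidableEq V] (W : ℕ → Submodule (ZMod 2) (Ch V)) (k : ℕ) :
    Submodule (ZMod 2) (Ch V) :=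
  Submodule.map (bdry V) (W (k + 1))

/-- Homology of the chain complex `W` in cardinality grading `k` (degree `k - 1`):
cycles modulo boundaries. -/
abbrev homolOf {V : Type*} [DecidableEq V] (W : ℕ → Submodule (ZMod 2) (Ch V)) (k : ℕ) :=
  ↥(cyclesOf W k) ⧸ (bdriesOf W k).comap (cyclesOf W k).subtype

/-- The map on homology induced by a degreewise inclusion of chain complexes. -/
noncomputable def homolMap {V : Type*} [DecidableEq V]
    (W W' : ℕ → Submodule (ZMod 2) (Ch V)) (h : ∀ k, W k ≤ W' k) (k : ℕ) :
    homolOf W k →ₗ[ZMod 2] homolOf W' k :=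
  Submodule.mapQ _ _ (Submodule.inclusion (inf_le_inf (h k) le_rfl))
    (by
      intro x hx
      simp only [Submodule.mem_comap, Submodule.subtype_apply, Submodule.coe_inclusion]
        at hx ⊢
      exact Submodule.map_mono (h (k + 1)) hx)

/-! Discrete Morse theory: partial matchings, acyclicity, the closure map. -/

/-- `Covers σ τ`: `σ` covers `τ` in the face poset, i.e. `τ ⊆ σ` in codimension one. -/
def Covers {V : Type*} (σ τ : Finset V) : Prop :=
  τ ⊆ σ ∧ σ.card = τ.card + 1

/-- A partial matching: an involution `μ` on a set `M` of simplices matching each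
simplex with a simplex that covers it or that it covers. -/
structure PartialMatching (V : Type*) where
  M : Set (Finset V)
  μ : Finset V → Finset V
  mem_M : ∀ σ ∈ M, μ σ ∈ M
  invol : ∀ σ ∈ M, μ (μ σ) = σ
  matched : ∀ σ ∈ M, Covers (μ σ) σ ∨ Covers σ (μ σ)

/-- Acyclicity of a partial matching: there is no cyclic sequence
`σ₁ ≻ μ(σ₁) ≺ σ₂ ≻ μ(σ₂) ≺ ⋯ ≺ σ_l ≻ μ(σ_l) ≺ σ₁` with `l ≥ 2` and the `σᵢ` distinct. -/
def PartialMatching.Acyclic {V : Type*} (m : PartialMatching V) : Prop :=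
  ¬ ∃ (l : ℕ) (f : ℕ → Finset V), 2 ≤ l ∧
      (∀ i < l, ∀ j < l, f i = f j → i = j) ∧
      (∀ i < l, f i ∈ m.M ∧ Covers (f i) (m.μ (f i))) ∧
      (∀ i < l, Covers (f ((i + 1) % l)) (m.μ (f i)))

/-- `M^↑`: matched simplices lying above their partner. -/
def Mup {V : Type*} (m : PartialMatching V) : Set (Finset V) :=
  {σ | σ ∈ m.M ∧ Covers σ (m.μ σ)}

/-- `M_q^↑` in cardinality grading: elements of `M^↑` with `k` vertices (degree `k-1`). -/
def MupCard {V : Type*} (m : PartialMatching V) (k : ℕ) : Set (Finset V) :=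
  {σ | σ ∈ Mup m ∧ σ.card = k}

/-- `R_q(μ)` in cardinality grading: the unmatched (critical) simplices of `K`
with `k` vertices (degree `k-1`). -/
def Rcard {V : Type*} (K : Set (Finset V)) (m : PartialMatching V) (k : ℕ) :
    Set (Finset V) :=
  {σ | σ ∈ K ∧ σ.card = k ∧ σ ∉ m.M}

/-- `(α, β)` is an edge of the graph `G(μ)`: `μ β` is defined, `β` lies above its
partner, and `α` covers `μ β` (with `β ≠ α`). -/
def IsEdge {V : Type*} (m : PartialMatching V) (α β : Finset V) : Prop :=
  β ≠ α ∧ β ∈ m.M ∧ Covers β (m.μ β) ∧ Covers α (m.μ β)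

open scoped Classical in
/-- `φ` is the closure map of the matching `m` on `K`: it satisfies the defining
recursion `φ α = α + ∑ φ β` over the edges `(α, β)` emanating from `α` in `G(μ)`. -/
def IsClosure {V : Type*} [Fintype V] [DecidableEq V] (K : Set (Finset V))
    (m : PartialMatching V) (φ : Finset V → Ch V) : Prop :=
  ∀ α ∈ K, φ α = Finsupp.single α 1 + ∑ β : Finset V, if IsEdge m α β then φ β else 0

/-- The degree-`(k-1)` chain group of the Morse (critical) complex of `C`:
the span of the closures of the unmatched simplices of `C` with `k` vertices. -/
noncomputable def critWOn {V : Type*} [DecidableEq V] (C : Set (Finset V))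
    (m : PartialMatching V) (φ : Finset V → Ch V) (k : ℕ) :
    Submodule (ZMod 2) (Ch V) :=
  Submodule.span (ZMod 2) {f | ∃ γ, γ ∈ C ∧ γ.card = k ∧ γ ∉ m.M ∧ f = φ γ}

theorem critWOn_mono {V : Type*} [DecidableEq V] {C₁ C₂ : Set (Finset V)}
    (h : C₁ ⊆ C₂) (m : PartialMatching V) (φ : Finset V → Ch V) (k : ℕ) :
    critWOn C₁ m φ k ≤ critWOn C₂ m φ k := by
  apply Submodule.span_mono
  rintro f ⟨γ, hγ, hc, hm, rfl⟩
  exact ⟨γ, h hγ, hc, hm, rfl⟩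

/-- The degree-`(k-1)` chain group of the complex `Match`, spanned by `M_{k-1}^↑`
together with the boundaries of the elements of `M_k^↑`. -/
noncomputable def matchW {V : Type*} [DecidableEq V] (m : PartialMatching V) (k : ℕ) :
    Submodule (ZMod 2) (Ch V) :=
  Submodule.span (ZMod 2)
    ({f | ∃ σ ∈ MupCard m k, f = Finsupp.single σ 1} ∪
      {f | ∃ β ∈ MupCard m (k + 1), f = bdry V (Finsupp.single β 1)})

/-- The set `B_q^R ∪ B_q^↑ ∪ B_q^↓` (in cardinality grading `k = q + 1`). -/
noncomputable def morseBasis {V : Type*} [DecidableEq V] (K : Set (Finset V))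
    (m : PartialMatching V) (φ : Finset V → Ch V) (k : ℕ) : Set (Ch V) :=
  {f | ∃ γ ∈ Rcard K m k, f = φ γ} ∪
    ({f | ∃ σ ∈ MupCard m k, f = Finsupp.single σ 1} ∪
      {f | ∃ β ∈ MupCard m (k + 1), f = bdry V (Finsupp.single β 1)})


/-! ### Auxiliary material for the proof of `morseBasis_isBasis`. -/

namespace MorseProofAux

set_option linter.unusedSectionVars false

variable {V : Type*} [Fintype V] [DecidableEq V]

lemma add_self_char2 (x : Ch V) : x + x = 0 := by
  have h : x + x = (2 : ZMod 2) • x := by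
    rw [show ((2 : ZMod 2)) = 1 + 1 by decide, add_smul, one_smul]
  rw [h, show ((2 : ZMod 2)) = 0 by decide, zero_smul]

/-- `edgeRel m β α` iff `(α, β)` is an edge of the matching graph (`β` is "smaller"). -/
def edgeRel (m : PartialMatching V) (β α : Finset V) : Prop := IsEdge m α β

lemma exists_chain {X : Type*} {r : X → X → Prop} {a b : X} (h : Relation.TransGen r a b) :
    ∃ n : ℕ, 1 ≤ n ∧ ∃ g : ℕ → X, g 0 = a ∧ g n = b ∧ ∀ i < n, r (g i) (g (i + 1)) := by
  induction h with
  | @single c hac =>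
      refine ⟨1, le_rfl, fun i => if i = 0 then a else c, by simp, by simp, ?_⟩
      intro i hi
      interval_cases i
      simpa using hac
  | @tail b c hab hbc ih =>
      obtain ⟨n, hn, g, h0, hb, hchain⟩ := ih
      refine ⟨n + 1, by omega, fun i => if i ≤ n then g i else c, by simp [h0], by simp, ?_⟩
      intro i hi
      rcases Nat.lt_or_ge i n with h | h
      · have h1 : i ≤ n := le_of_lt h
        have h2 : i + 1 ≤ n := h
        simp only [if_pos h1, if_pos h2]
        exact hchain i h
      · have hie : i = n := by omega
        subst hie
        simp only [if_pos le_rfl, if_neg (by omega : ¬ i + 1 ≤ i)]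
        rw [hb]
        exact hbc

lemma not_transGen_self {m : PartialMatching V} (hac : m.Acyclic) (a : Finset V) :
    ¬ Relation.TransGen (edgeRel m) a a := by
  intro h
  obtain ⟨n0, hn0, g0, hg00, hg0n, hch0⟩ := exists_chain h
  have hQ : ∃ n, 1 ≤ n ∧ ∃ g : ℕ → Finset V, g 0 = g n ∧ ∀ i < n, edgeRel m (g i) (g (i + 1)) :=
    ⟨n0, hn0, g0, by rw [hg00, hg0n], hch0⟩
  classical
  obtain ⟨hN1, g, hg0, hch⟩ := Nat.find_spec hQ
  set N := Nat.find hQ with hN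
  have hNmin : ∀ j, j < N →
      ¬(1 ≤ j ∧ ∃ g : ℕ → Finset V, g 0 = g j ∧ ∀ i < j, edgeRel m (g i) (g (i + 1))) :=
    fun j hj => Nat.find_min hQ hj
  have hedge : ∀ i < N, IsEdge m (g (i + 1)) (g i) := fun i hi => hch i hi
  have hN2 : 2 ≤ N := by
    rcases Nat.lt_or_ge N 2 with h2 | h2
    · have hNe : N = 1 := by omega
      have he := hedge 0 (by omega)
      exact (he.1 (by rw [hg0, hNe])).elim
    · exact h2
  have hinj : ∀ i < N, ∀ j < N, g i = g j → i = j := by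
    have key : ∀ i j, i < j → j < N → g i ≠ g j := by
      intro i j hij hjN heq
      refine hNmin (j - i) (by omega) ⟨by omega, fun t => g (i + t), ?_, ?_⟩
      · show g (i + 0) = g (i + (j - i))
        rw [Nat.add_zero, show i + (j - i) = j by omega]
        exact heq
      · intro t ht
        show edgeRel m (g (i + t)) (g (i + (t + 1)))
        have hc := hch (i + t) (by omega)
        rw [show i + t + 1 = i + (t + 1) by omega] at hc
        exact hc
    intro i hi j hj heq
    rcases lt_trichotomy i j with hlt | hlt | hlt
    · exact absurd heq (key i j hlt hj)
    · exact hlt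
    · exact absurd heq.symm (key j i hlt hi)
  apply hac
  refine ⟨N, g, hN2, hinj, ?_, ?_⟩
  · intro i hi
    have he := hedge i hi
    exact ⟨he.2.1, he.2.2.1⟩
  · intro i hi
    have he := hedge i hi
    rcases Nat.lt_or_ge (i + 1) N with hlt | hge
    · rw [Nat.mod_eq_of_lt hlt]
      exact he.2.2.2
    · have hieq : i + 1 = N := by omega
      rw [hieq, Nat.mod_self, hg0, ← hieq]
      exact he.2.2.2

/-- The number of predecessors of `α` in the matching graph. -/
noncomputable def predCount (m : PartialMatching V) (α : Finset V) : ℕ :=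
  {γ : Finset V | Relation.TransGen (edgeRel m) γ α}.ncard

lemma predCount_lt {m : PartialMatching V} (hac : m.Acyclic) {α β : Finset V}
    (he : IsEdge m α β) : predCount m β < predCount m α := by
  apply Set.ncard_lt_ncard
  · have hsub : {γ : Finset V | Relation.TransGen (edgeRel m) γ β}
        ⊆ {γ : Finset V | Relation.TransGen (edgeRel m) γ α} :=
      fun γ hγ => Relation.TransGen.tail hγ he
    refine (Set.ssubset_iff_of_subset hsub).mpr ⟨β, Relation.TransGen.single he, ?_⟩
    exact not_transGen_self hac β
  · exact Set.toFinite _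

lemma bdry_single {β : Finset V} (h2 : 2 ≤ β.card) :
    bdry V (Finsupp.single β (1 : ZMod 2)) = ∑ v ∈ β, Finsupp.single (β.erase v) (1 : ZMod 2) := by
  unfold bdry
  rw [Finsupp.linearCombination_single, one_smul, if_neg (by omega)]

lemma span_apply_eq_zero {P : Finset V → Prop} {f : Ch V}
    (hf : f ∈ Submodule.span (ZMod 2) {g : Ch V | ∃ τ, P τ ∧ g = Finsupp.single τ (1 : ZMod 2)})
    {σ : Finset V} (hσ : ¬ P σ) : f σ = 0 := by
  induction hf using Submodule.span_induction with
  | mem g hg =>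
      obtain ⟨τ, hτ, rfl⟩ := hg
      rw [Finsupp.single_apply, if_neg (show ¬ τ = σ from fun h => hσ (h ▸ hτ))]
  | zero => simp
  | add x y _ _ hx hy => simp [Finsupp.add_apply, hx, hy]
  | smul c x _ hx => simp [Finsupp.smul_apply, hx]

lemma closure_mem_span {K : Set (Finset V)} {m : PartialMatching V} (hMK : m.M ⊆ K)
    (hac : m.Acyclic) {φ : Finset V → Ch V} (hφ : IsClosure K m φ) :
    ∀ α ∈ K, φ α + Finsupp.single α 1 ∈ Submodule.span (ZMod 2)
      {f : Ch V | ∃ τ, (τ ∈ K ∧ τ ∈ Mup m ∧ τ.card = α.card) ∧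
        f = Finsupp.single τ (1 : ZMod 2)} := by
  suffices H : ∀ n, ∀ α, α ∈ K → predCount m α ≤ n →
      φ α + Finsupp.single α 1 ∈ Submodule.span (ZMod 2)
        {f : Ch V | ∃ τ, (τ ∈ K ∧ τ ∈ Mup m ∧ τ.card = α.card) ∧
          f = Finsupp.single τ (1 : ZMod 2)} by
    exact fun α hα => H (predCount m α) α hα le_rfl
  intro n
  induction n using Nat.strong_induction_on with
  | _ n ih =>
    intro α hα hn
    rw [hφ α hα]
    have hrw : ∀ x s : Ch V, (x + s) + x = s := by
      intro x s
      rw [add_right_comm, add_self_char2, zero_add]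
    rw [hrw]
    refine Submodule.sum_mem _ fun β _ => ?_
    split_ifs with he
    · have hβM : β ∈ m.M := he.2.1
      have hβK : β ∈ K := hMK hβM
      have hcard : β.card = α.card := by
        have h1 := he.2.2.1.2
        have h2 := he.2.2.2.2
        omega
      have hβ1 := ih (predCount m β) (lt_of_lt_of_le (predCount_lt hac he) hn) β hβK le_rfl
      rw [hcard] at hβ1
      have hβ2 : Finsupp.single β (1 : ZMod 2) ∈ Submodule.span (ZMod 2)
          {f : Ch V | ∃ τ, (τ ∈ K ∧ τ ∈ Mup m ∧ τ.card = α.card) ∧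
            f = Finsupp.single τ (1 : ZMod 2)} :=
        Submodule.subset_span ⟨β, ⟨hβK, ⟨hβM, he.2.2.1⟩, hcard⟩, rfl⟩
      have hφβ : φ β = (φ β + Finsupp.single β 1) + Finsupp.single β 1 := by
        rw [add_assoc, add_self_char2, add_zero]
      rw [hφβ]
      exact add_mem hβ1 hβ2
    · exact zero_mem _

lemma triangular_spanning {s : Set (Finset V)} {e : Finset V → Ch V} {ρ : Finset V → ℕ}
    (he : ∀ σ ∈ s, e σ + Finsupp.single σ 1 ∈ Submodule.span (ZMod 2)
      {f : Ch V | ∃ τ, (τ ∈ s ∧ ρ τ < ρ σ) ∧ f = Finsupp.single τ (1 : ZMod 2)}) :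
    Submodule.span (ZMod 2) (e '' s)
      = Submodule.span (ZMod 2) {f : Ch V | ∃ τ, τ ∈ s ∧ f = Finsupp.single τ (1 : ZMod 2)} := by
  apply le_antisymm
  · rw [Submodule.span_le]
    rintro _ ⟨σ, hσ, rfl⟩
    simp only [SetLike.mem_coe]
    have h1 : Finsupp.single σ (1 : ZMod 2) ∈ Submodule.span (ZMod 2)
        {f : Ch V | ∃ τ, τ ∈ s ∧ f = Finsupp.single τ (1 : ZMod 2)} :=
      Submodule.subset_span ⟨σ, hσ, rfl⟩
    have h2 : e σ + Finsupp.single σ 1 ∈ Submodule.span (ZMod 2)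
        {f : Ch V | ∃ τ, τ ∈ s ∧ f = Finsupp.single τ (1 : ZMod 2)} := by
      refine Submodule.span_mono ?_ (he σ hσ)
      rintro f ⟨τ, ⟨hτ, _⟩, rfl⟩
      exact ⟨τ, hτ, rfl⟩
    have hes : e σ = (e σ + Finsupp.single σ 1) + Finsupp.single σ 1 := by
      rw [add_assoc, add_self_char2, add_zero]
    rw [hes]
    exact add_mem h2 h1
  · rw [Submodule.span_le]
    rintro _ ⟨τ, hτ, rfl⟩
    simp only [SetLike.mem_coe]
    have H : ∀ n, ∀ τ, τ ∈ s → ρ τ ≤ n →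
        Finsupp.single τ (1 : ZMod 2) ∈ Submodule.span (ZMod 2) (e '' s) := by
      intro n
      induction n using Nat.strong_induction_on with
      | _ n ih =>
        intro τ hτ hρ
        have h1 : e τ ∈ Submodule.span (ZMod 2) (e '' s) :=
          Submodule.subset_span ⟨τ, hτ, rfl⟩
        have h2 : e τ + Finsupp.single τ 1 ∈ Submodule.span (ZMod 2) (e '' s) := by
          refine Submodule.span_le.mpr ?_ (he τ hτ)
          rintro f ⟨τ', ⟨hτ's, hlt⟩, rfl⟩
          exact ih (ρ τ') (lt_of_lt_of_le hlt hρ) τ' hτ's le_rfl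
        have hs1 : Finsupp.single τ (1 : ZMod 2) = e τ + (e τ + Finsupp.single τ 1) := by
          rw [← add_assoc, add_self_char2, zero_add]
        rw [hs1]
        exact add_mem h1 h2
    exact H (ρ τ) τ hτ le_rfl

lemma triangular_indep {s : Set (Finset V)} {e : Finset V → Ch V} {ρ : Finset V → ℕ}
    (he : ∀ σ ∈ s, e σ + Finsupp.single σ 1 ∈ Submodule.span (ZMod 2)
      {f : Ch V | ∃ τ, (τ ∈ s ∧ ρ τ < ρ σ) ∧ f = Finsupp.single τ (1 : ZMod 2)}) :
    LinearIndependent (ZMod 2) (fun x : s => e x) := by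
  rw [linearIndependent_iff']
  intro t
  induction t using Finset.strongInduction with
  | _ t ih =>
    intro g hsum i hit
    have hne : t.Nonempty := ⟨i, hit⟩
    obtain ⟨σ₀, hσ₀t, hmax⟩ := Finset.exists_max_image t (fun j => ρ (j : Finset V)) hne
    have heval : ∀ j : s, j ∈ t →
        e (j : Finset V) (σ₀ : Finset V) = if j = σ₀ then 1 else 0 := by
      intro j hjt
      have hz : (e (j : Finset V) + Finsupp.single (j : Finset V) (1 : ZMod 2)) ((σ₀ : s) : Finset V) = 0 := by
        apply span_apply_eq_zero (he (j : Finset V) j.2)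
        rintro ⟨-, hlt⟩
        exact absurd hlt (by have := hmax j hjt; omega)
      rw [Finsupp.add_apply] at hz
      have h2 : ∀ a b : ZMod 2, a + b = 0 → a = b := by decide
      rw [h2 _ _ hz, Finsupp.single_apply]
      by_cases hjσ : j = σ₀
      · rw [if_pos (by rw [hjσ]), if_pos hjσ]
      · rw [if_neg (fun h => hjσ (Subtype.ext h)), if_neg hjσ]
    have h0 : (∑ j ∈ t, g j • e (j : Finset V)) (σ₀ : Finset V) = 0 := by
      rw [show ∑ j ∈ t, g j • e (j : Finset V) = 0 from hsum]
      rfl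
    rw [Finsupp.finset_sum_apply] at h0
    have h0' : ∑ j ∈ t, (if j = σ₀ then g j else 0) = 0 := by
      have hcg : ∑ j ∈ t, (if j = σ₀ then g j else 0) = ∑ j ∈ t, (g j • e (j : Finset V)) (σ₀ : Finset V) :=
        Finset.sum_congr rfl fun j hj => by
          rw [Finsupp.smul_apply, heval j hj, smul_eq_mul]
          by_cases h : j = σ₀ <;> simp [h]
      rw [hcg]
      exact h0
    have hg0 : g σ₀ = 0 := by
      rwa [Finset.sum_ite_eq' t σ₀ g, if_pos hσ₀t] at h0'
    have hsum' : ∑ j ∈ t.erase σ₀, g j • e (j : Finset V) = 0 := by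
      calc ∑ j ∈ t.erase σ₀, g j • e (j : Finset V)
          = g σ₀ • e (σ₀ : Finset V) + ∑ j ∈ t.erase σ₀, g j • e (j : Finset V) := by
            rw [hg0, zero_smul, zero_add]
        _ = ∑ j ∈ t, g j • e (j : Finset V) := Finset.add_sum_erase t _ hσ₀t
        _ = 0 := hsum
    by_cases hiσ : i = σ₀
    · rw [hiσ]; exact hg0
    · exact ih (t.erase σ₀) (Finset.erase_ssubset hσ₀t) g hsum' i (Finset.mem_erase.mpr ⟨hiσ, hit⟩)

end MorseProofAux

open MorseProofAux

/-- For a finite simplicial complex `K` with an acyclic partial matching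
`μ : M → M`, the set `B_q^R ∪ B_q^↑ ∪ B_q^↓` — where `B_q^R = {φ_q γ : γ ∈ R_q(μ)}`,
`B_q^↑ = M_q^↑` and `B_q^↓ = {∂β : β ∈ M_{q+1}^↑}` — is a basis of the `ℤ/2`-vector
space `C_q(K)`. -/
theorem morseBasis_isBasis {V : Type*} [Fintype V] [DecidableEq V]
    (K : Set (Finset V)) (hK : IsComplex K)
    (m : PartialMatching V) (hMK : m.M ⊆ K) (hac : m.Acyclic)
    (φ : Finset V → Ch V) (hφ : IsClosure K m φ) (q : ℕ) :
    LinearIndependent (ZMod 2)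
      (fun x : morseBasis K m φ (q + 1) => (x : Ch V)) ∧
    Submodule.span (ZMod 2) (morseBasis K m φ (q + 1)) = chainCard K (q + 1) := by
  classical
  set k := q + 1 with hk
  set S : Set (Finset V) := {σ | σ ∈ K ∧ σ.card = k} with hS
  set e : Finset V → Ch V := fun σ =>
    if σ ∉ m.M then φ σ
    else if Covers σ (m.μ σ) then Finsupp.single σ 1
    else bdry V (Finsupp.single (m.μ σ) 1) with hee
  set ρ : Finset V → ℕ := fun σ =>
    if σ ∉ m.M then 1
    else if Covers σ (m.μ σ) then 0
    else 2 + predCount m (m.μ σ) with hρ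
  have eR : ∀ σ, σ ∉ m.M → e σ = φ σ := fun σ h => by
    simp only [hee]; rw [if_pos h]
  have ρR : ∀ σ, σ ∉ m.M → ρ σ = 1 := fun σ h => by
    simp only [hρ]; rw [if_pos h]
  have eU : ∀ σ, σ ∈ m.M → Covers σ (m.μ σ) → e σ = Finsupp.single σ 1 := fun σ h1 h2 => by
    simp only [hee]; rw [if_neg (not_not_intro h1), if_pos h2]
  have ρU : ∀ σ, σ ∈ m.M → Covers σ (m.μ σ) → ρ σ = 0 := fun σ h1 h2 => by
    simp only [hρ]; rw [if_neg (not_not_intro h1), if_pos h2]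
  have eD : ∀ σ, σ ∈ m.M → ¬ Covers σ (m.μ σ) →
      e σ = bdry V (Finsupp.single (m.μ σ) 1) := fun σ h1 h2 => by
    simp only [hee]; rw [if_neg (not_not_intro h1), if_neg h2]
  have ρD : ∀ σ, σ ∈ m.M → ¬ Covers σ (m.μ σ) →
      ρ σ = 2 + predCount m (m.μ σ) := fun σ h1 h2 => by
    simp only [hρ]; rw [if_neg (not_not_intro h1), if_neg h2]
  -- Step 1: the Morse basis is the image of `S` under `e`.
  have himg : morseBasis K m φ k = e '' S := by
    ext f
    simp only [morseBasis, Rcard, MupCard, Mup, Set.mem_union, Set.mem_setOf_eq,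
      Set.mem_image, hS]
    constructor
    · rintro (⟨γ, ⟨hγK, hγc, hγM⟩, rfl⟩ | ⟨σ, ⟨⟨hσM, hσcov⟩, hσc⟩, rfl⟩ |
        ⟨β, ⟨⟨hβM, hβcov⟩, hβc⟩, rfl⟩)
      · exact ⟨γ, ⟨hγK, hγc⟩, eR γ hγM⟩
      · exact ⟨σ, ⟨hMK hσM, hσc⟩, eU σ hσM hσcov⟩
      · refine ⟨m.μ β, ⟨hMK (m.mem_M β hβM), ?_⟩, ?_⟩
        · have := hβcov.2; omega
        · have h1 : m.μ β ∈ m.M := m.mem_M β hβM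
          have h2 : ¬ Covers (m.μ β) (m.μ (m.μ β)) := by
            rw [m.invol β hβM]
            rintro ⟨hsub, hcard⟩
            have := hβcov.2
            omega
          rw [eD (m.μ β) h1 h2, m.invol β hβM]
    · rintro ⟨σ, ⟨hσK, hσc⟩, rfl⟩
      by_cases hM : σ ∈ m.M
      · by_cases hcov : Covers σ (m.μ σ)
        · exact Or.inr (Or.inl ⟨σ, ⟨⟨hM, hcov⟩, hσc⟩, eU σ hM hcov⟩)
        · have hd : Covers (m.μ σ) σ := (m.matched σ hM).resolve_right hcov
          refine Or.inr (Or.inr ⟨m.μ σ, ⟨⟨m.mem_M σ hM, ?_⟩, ?_⟩, eD σ hM hcov⟩)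
          · rw [m.invol σ hM]; exact hd
          · have := hd.2; omega
      · exact Or.inl ⟨σ, ⟨hσK, hσc, hM⟩, eR σ hM⟩
  -- Step 2: triangularity.
  have htri : ∀ σ ∈ S, e σ + Finsupp.single σ 1 ∈ Submodule.span (ZMod 2)
      {f : Ch V | ∃ τ, (τ ∈ S ∧ ρ τ < ρ σ) ∧ f = Finsupp.single τ (1 : ZMod 2)} := by
    rintro σ ⟨hσK, hσc⟩
    by_cases hM : σ ∈ m.M
    · by_cases hcov : Covers σ (m.μ σ)
      · rw [eU σ hM hcov, add_self_char2]
        exact zero_mem _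
      · have hd : Covers (m.μ σ) σ := (m.matched σ hM).resolve_right hcov
        have hβM : m.μ σ ∈ m.M := m.mem_M σ hM
        have hβK : m.μ σ ∈ K := hMK hβM
        have hβc : (m.μ σ).card = k + 1 := by have := hd.2; omega
        have hsd : ((m.μ σ) \ σ).card = 1 := by
          rw [Finset.card_sdiff_of_subset hd.1]; omega
        obtain ⟨v₀, hv₀⟩ := Finset.card_eq_one.mp hsd
        have hv₀mem : v₀ ∈ (m.μ σ) \ σ := by rw [hv₀]; exact Finset.mem_singleton_self v₀
        have hv₀β : v₀ ∈ m.μ σ := (Finset.mem_sdiff.mp hv₀mem).1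
        have hv₀σ : v₀ ∉ σ := (Finset.mem_sdiff.mp hv₀mem).2
        have herase : (m.μ σ).erase v₀ = σ := by
          have hsub : σ ⊆ (m.μ σ).erase v₀ := Finset.subset_erase.mpr ⟨hd.1, hv₀σ⟩
          have hcard : ((m.μ σ).erase v₀).card ≤ σ.card := by
            rw [Finset.card_erase_of_mem hv₀β]; omega
          exact (Finset.eq_of_subset_of_card_le hsub hcard).symm
        rw [eD σ hM hcov, bdry_single (by omega), ← Finset.add_sum_erase _ _ hv₀β, herase,
          add_right_comm, add_self_char2, zero_add]
        refine Submodule.sum_mem _ fun v hv => ?_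
        have hvβ : v ∈ m.μ σ := hd.1 hv
        have hvv₀ : v ≠ v₀ := fun h => hv₀σ (h ▸ hv)
        have hτc : ((m.μ σ).erase v).card = k := by
          rw [Finset.card_erase_of_mem hvβ]; omega
        have hτK : (m.μ σ).erase v ∈ K := by
          refine ((hK (m.μ σ) hβK).2 _ (Finset.erase_subset v (m.μ σ)) ?_)
          rw [← Finset.card_pos, hτc]; omega
        have hτσ : (m.μ σ).erase v ≠ σ := by
          intro hcontra
          have hc2 : (m.μ σ).erase v = (m.μ σ).erase v₀ := hcontra.trans herase.symm
          have h1 : v ∈ (m.μ σ).erase v₀ := Finset.mem_erase.mpr ⟨hvv₀, hvβ⟩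
          rw [← hc2] at h1
          exact Finset.notMem_erase v (m.μ σ) h1
        refine Submodule.subset_span ⟨(m.μ σ).erase v, ⟨⟨hτK, hτc⟩, ?_⟩, rfl⟩
        rw [ρD σ hM hcov]
        by_cases hτM : (m.μ σ).erase v ∈ m.M
        · by_cases hτcov : Covers ((m.μ σ).erase v) (m.μ ((m.μ σ).erase v))
          · rw [ρU _ hτM hτcov]; omega
          · rw [ρD _ hτM hτcov]
            have hτd : Covers (m.μ ((m.μ σ).erase v)) ((m.μ σ).erase v) :=
              (m.matched _ hτM).resolve_right hτcov
            have hedge : IsEdge m (m.μ σ) (m.μ ((m.μ σ).erase v)) := by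
              refine ⟨?_, m.mem_M _ hτM, ?_, ?_⟩
              · intro hcontra
                apply hτσ
                have hmm : m.μ (m.μ ((m.μ σ).erase v)) = m.μ (m.μ σ) := by rw [hcontra]
                rw [m.invol _ hτM, m.invol σ hM] at hmm
                exact hmm
              · rw [m.invol _ hτM]; exact hτd
              · rw [m.invol _ hτM]
                exact ⟨Finset.erase_subset v (m.μ σ), by omega⟩
            have := predCount_lt hac hedge
            omega
        · rw [ρR _ hτM]; omega
    · rw [eR σ hM]
      refine Submodule.span_mono ?_ (closure_mem_span hMK hac hφ σ hσK)
      rintro f ⟨τ, ⟨hτK, ⟨hτM, hτcov⟩, hτc⟩, rfl⟩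
      refine ⟨τ, ⟨⟨hτK, by omega⟩, ?_⟩, rfl⟩
      rw [ρU τ hτM hτcov, ρR σ hM]
      omega
  have hspan := triangular_spanning htri
  have hindep := triangular_indep htri
  constructor
  · rw [himg]
    exact LinearIndepOn.id_image (v := e) hindep
  · rw [himg, hspan]
    unfold chainCard
    congr 1
    ext f
    constructor
    · rintro ⟨τ, ⟨h1, h2⟩, h3⟩
      exact ⟨τ, h1, h2, h3⟩
    · rintro ⟨τ, h1, h2, h3⟩
      exact ⟨τ, ⟨h1, h2⟩, h3⟩
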